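/- Let (X, Σ) be a countably compact, Lindelöf, Hausdorff σ-topological space, I a positive bounded linear functional on C_σ(X), and μ₀ defined on σ-closed sets by μ₀(K) := inf{I(f) : f ∈ C_σ(X), f ≥ χ_K}. Then for all disjoint σ-closed sets K and L, μ₀(K ∪ L) = μ₀(K) + μ₀(L). -/

import Mathlib

/-- A σ-topology on a set `X`: contains `∅` and `univ`, closed under finite
intersections and countable unions. -/
structure SigmaTopology (X : Type*) where
  IsOpen : Set X → Prop
  isOpen_empty : IsOpen ∅
  isOpen_univ : IsOpen Set.univ
  isOpen_inter : ∀ s t : Set X, IsOpen s → IsOpen t → IsOpen (s ∩ t)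
  isOpen_iUnion : ∀ f : ℕ → Set X, (∀ n, IsOpen (f n)) → IsOpen (⋃ n, f n)

namespace SigmaTopology

variable {X : Type*}

/-- A set is σ-closed if its complement is σ-open. -/
def IsClosed (T : SigmaTopology X) (s : Set X) : Prop := T.IsOpen sᶜ

/-- The σ-space is Hausdorff if distinct points have disjoint σ-open neighborhoods. -/
def Hausdorff (T : SigmaTopology X) : Prop :=
  ∀ x y : X, x ≠ y → ∃ U V : Set X, T.IsOpen U ∧ T.IsOpen V ∧ x ∈ U ∧ y ∈ V ∧ U ∩ V = ∅

/-- `K` is countably compact: every countable cover of `K` by σ-open sets has a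
finite subcover. -/
def CountablyCompactOn (T : SigmaTopology X) (K : Set X) : Prop :=
  ∀ U : ℕ → Set X, (∀ n, T.IsOpen (U n)) → K ⊆ ⋃ n, U n → ∃ s : Finset ℕ, K ⊆ ⋃ n ∈ s, U n

/-- The space is countably compact. -/
def CountablyCompact (T : SigmaTopology X) : Prop := T.CountablyCompactOn Set.univ

/-- The space is Lindelöf: every cover by σ-open sets has a countable subcover. -/
def Lindelof (T : SigmaTopology X) : Prop :=
  ∀ 𝒰 : Set (Set X), (∀ U ∈ 𝒰, T.IsOpen U) → ⋃₀ 𝒰 = Set.univ →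
    ∃ 𝒱 ⊆ 𝒰, 𝒱.Countable ∧ ⋃₀ 𝒱 = Set.univ

/-- The space is σ-normal: disjoint σ-closed sets are separated by σ-open sets. -/
def Normal (T : SigmaTopology X) : Prop :=
  ∀ A B : Set X, T.IsClosed A → T.IsClosed B → A ∩ B = ∅ →
    ∃ U V : Set X, T.IsOpen U ∧ T.IsOpen V ∧ A ⊆ U ∧ B ⊆ V ∧ U ∩ V = ∅

/-- σ-continuity of a real-valued function: preimages of open subsets of `ℝ`
are σ-open. -/
def SigmaContinuous (T : SigmaTopology X) (f : X → ℝ) : Prop :=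
  ∀ U : Set ℝ, _root_.IsOpen U → T.IsOpen (f ⁻¹' U)

end SigmaTopology


namespace SigmaTopology

variable {X : Type*} (T : SigmaTopology X)


theorem isOpen_iUnion_ctble {ι : Type*} [Countable ι] (f : ι → Set X)
    (h : ∀ i, T.IsOpen (f i)) : T.IsOpen (⋃ i, f i) := by
  cases isEmpty_or_nonempty ι with
  | inl hι => simpa [Set.iUnion_of_empty] using T.isOpen_empty
  | inr hι =>
    obtain ⟨g, hg⟩ := exists_surjective_nat ι
    rw [← hg.iUnion_comp f]
    exact T.isOpen_iUnion _ (fun n => h (g n))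

theorem isOpen_ray_lt {f : X → ℝ} (hf : T.SigmaContinuous f) (a : ℝ) :
    T.IsOpen {x | f x < a} := hf (Set.Iio a) isOpen_Iio

theorem isOpen_ray_gt {f : X → ℝ} (hf : T.SigmaContinuous f) (a : ℝ) :
    T.IsOpen {x | a < f x} := hf (Set.Ioi a) isOpen_Ioi

theorem sigmaContinuous_of_rays {f : X → ℝ}
    (h1 : ∀ a : ℝ, T.IsOpen {x | a < f x}) (h2 : ∀ a : ℝ, T.IsOpen {x | f x < a}) :
    T.SigmaContinuous f := by
  intro U hU
  have key : f ⁻¹' U = ⋃ p : {p : ℚ × ℚ // Set.Ioo (p.1 : ℝ) (p.2 : ℝ) ⊆ U},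
      ({x | ((p : ℚ × ℚ).1 : ℝ) < f x} ∩ {x | f x < ((p : ℚ × ℚ).2 : ℝ)}) := by
    ext x
    simp only [Set.mem_preimage, Set.mem_iUnion, Set.mem_inter_iff, Set.mem_setOf_eq]
    constructor
    · intro hx
      obtain ⟨ε, hε, hball⟩ := Metric.isOpen_iff.1 hU _ hx
      obtain ⟨p, hp1, hp2⟩ := exists_rat_btwn (show f x - ε < f x by linarith)
      obtain ⟨q, hq1, hq2⟩ := exists_rat_btwn (show f x < f x + ε by linarith)
      have hsub : Set.Ioo (p : ℝ) (q : ℝ) ⊆ U := by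
        intro y hy
        apply hball
        rw [Real.ball_eq_Ioo]
        exact ⟨lt_of_le_of_lt (by linarith) hy.1, lt_of_lt_of_le hy.2 (by linarith)⟩
      exact ⟨⟨⟨p, q⟩, hsub⟩, hp2, hq1⟩
    · rintro ⟨p, hp1, hp2⟩
      exact p.2 ⟨hp1, hp2⟩
  rw [key]
  exact T.isOpen_iUnion_ctble _ (fun p => T.isOpen_inter _ _ (h1 _) (h2 _))

theorem sigmaContinuous_const (c : ℝ) : T.SigmaContinuous (fun _ => c) := by
  intro U hU
  by_cases hc : c ∈ U
  · have : (fun _ : X => c) ⁻¹' U = Set.univ := by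
      ext x; simp [hc]
    rw [this]; exact T.isOpen_univ
  · have : (fun _ : X => c) ⁻¹' U = ∅ := by
      ext x; simp [hc]
    rw [this]; exact T.isOpen_empty

theorem sigmaContinuous_comp {f : X → ℝ} (hf : T.SigmaContinuous f) {g : ℝ → ℝ}
    (hg : Continuous g) : T.SigmaContinuous (fun x => g (f x)) := by
  intro U hU
  have : (fun x => g (f x)) ⁻¹' U = f ⁻¹' (g ⁻¹' U) := rfl
  rw [this]
  exact hf _ (hg.isOpen_preimage U hU)

theorem sigmaContinuous_add {f g : X → ℝ} (hf : T.SigmaContinuous f)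
    (hg : T.SigmaContinuous g) : T.SigmaContinuous (fun x => f x + g x) := by
  apply T.sigmaContinuous_of_rays
  · intro a
    have key : {x | a < f x + g x} = ⋃ q : ℚ, ({x | (q:ℝ) < f x} ∩ {x | a - q < g x}) := by
      ext x
      simp only [Set.mem_setOf_eq, Set.mem_iUnion, Set.mem_inter_iff]
      constructor
      · intro hx
        obtain ⟨q, hq1, hq2⟩ := exists_rat_btwn (show a - g x < f x by linarith)
        exact ⟨q, hq2, by linarith⟩
      · rintro ⟨q, h1, h2⟩; linarith
    rw [key]
    exact T.isOpen_iUnion_ctble _ (fun q => T.isOpen_inter _ _ (T.isOpen_ray_gt hf _) (T.isOpen_ray_gt hg _))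
  · intro a
    have key : {x | f x + g x < a} = ⋃ q : ℚ, ({x | f x < (q:ℝ)} ∩ {x | g x < a - q}) := by
      ext x
      simp only [Set.mem_setOf_eq, Set.mem_iUnion, Set.mem_inter_iff]
      constructor
      · intro hx
        obtain ⟨q, hq1, hq2⟩ := exists_rat_btwn (show f x < a - g x by linarith)
        exact ⟨q, hq1, by linarith⟩
      · rintro ⟨q, h1, h2⟩; linarith
    rw [key]
    exact T.isOpen_iUnion_ctble _ (fun q => T.isOpen_inter _ _ (T.isOpen_ray_lt hf _) (T.isOpen_ray_lt hg _))

theorem sigmaContinuous_mul_nonneg {f g : X → ℝ} (hf : T.SigmaContinuous f)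
    (hg : T.SigmaContinuous g) (hf0 : ∀ x, 0 ≤ f x) (hg0 : ∀ x, 0 ≤ g x) :
    T.SigmaContinuous (fun x => f x * g x) := by
  apply T.sigmaContinuous_of_rays
  · intro a
    by_cases ha : a < 0
    · have : {x | a < f x * g x} = Set.univ := by
        ext x; simp only [Set.mem_setOf_eq, Set.mem_univ, iff_true]
        exact lt_of_lt_of_le ha (mul_nonneg (hf0 x) (hg0 x))
      rw [this]; exact T.isOpen_univ
    · push_neg at ha
      have key : {x | a < f x * g x} =
          ⋃ q : ℚ, if 0 < q then {x | (q:ℝ) < f x} ∩ {x | a / q < g x} else ∅ := by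
        ext x
        simp only [Set.mem_setOf_eq, Set.mem_iUnion]
        constructor
        · intro hx
          have hfx : 0 < f x := by
            rcases lt_or_eq_of_le (hf0 x) with h | h
            · exact h
            · exfalso; rw [← h] at hx; simp at hx; linarith
          have hgx : 0 < g x := by
            rcases lt_or_eq_of_le (hg0 x) with h | h
            · exact h
            · exfalso; rw [← h] at hx; simp at hx; linarith
          have : a / g x < f x := (div_lt_iff₀ hgx).2 hx
          obtain ⟨q, hq1, hq2⟩ := exists_rat_btwn this
          have hq0 : 0 < (q:ℝ) := lt_of_le_of_lt (div_nonneg ha (le_of_lt hgx)) hq1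
          refine ⟨q, ?_⟩
          rw [if_pos (by exact_mod_cast hq0)]
          refine ⟨hq2, ?_⟩
          show a / (q : ℝ) < g x
          rw [div_lt_iff₀ hq0, mul_comm]
          exact (div_lt_iff₀ hgx).1 hq1
        · rintro ⟨q, hq⟩
          by_cases hq0 : 0 < q
          · rw [if_pos hq0] at hq
            have hq0' : 0 < (q:ℝ) := by exact_mod_cast hq0
            have h1 : a < q * g x := (div_lt_iff₀' hq0').1 hq.2
            calc a < (q:ℝ) * g x := h1
              _ ≤ f x * g x := mul_le_mul_of_nonneg_right (le_of_lt hq.1) (hg0 x)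
          · rw [if_neg hq0] at hq; exact hq.elim
      rw [key]
      apply T.isOpen_iUnion_ctble
      intro q
      by_cases hq0 : 0 < q
      · rw [if_pos hq0]; exact T.isOpen_inter _ _ (T.isOpen_ray_gt hf _) (T.isOpen_ray_gt hg _)
      · rw [if_neg hq0]; exact T.isOpen_empty
  · intro a
    by_cases ha : 0 < a
    · have key : {x | f x * g x < a} =
          ⋃ q : ℚ, if 0 < q then {x | f x < (q:ℝ)} ∩ {x | g x < a / q} else ∅ := by
        ext x
        simp only [Set.mem_setOf_eq, Set.mem_iUnion]
        constructor
        · intro hx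
          by_cases hgx : 0 < g x
          · have hfa : f x < a / g x := (lt_div_iff₀ hgx).2 hx
            obtain ⟨q, hq1, hq2⟩ := exists_rat_btwn hfa
            have hq0 : 0 < (q:ℝ) := lt_of_le_of_lt (hf0 x) hq1
            refine ⟨q, ?_⟩
            rw [if_pos (by exact_mod_cast hq0)]
            refine ⟨hq1, ?_⟩
            show g x < a / (q : ℝ)
            rw [lt_div_iff₀ hq0, mul_comm]
            exact (lt_div_iff₀ hgx).1 hq2
          · push_neg at hgx
            have hgx0 : g x = 0 := le_antisymm hgx (hg0 x)
            obtain ⟨q, hq1, hq2⟩ := exists_rat_btwn (show f x < f x + 1 by linarith)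
            have hq0 : 0 < (q:ℝ) := lt_of_le_of_lt (hf0 x) hq1
            refine ⟨q, ?_⟩
            rw [if_pos (by exact_mod_cast hq0)]
            refine ⟨hq1, ?_⟩
            show g x < a / (q : ℝ)
            rw [hgx0]
            positivity
        · rintro ⟨q, hq⟩
          by_cases hq0 : 0 < q
          · rw [if_pos hq0] at hq
            have hq0' : 0 < (q:ℝ) := by exact_mod_cast hq0
            calc f x * g x ≤ (q:ℝ) * g x := mul_le_mul_of_nonneg_right (le_of_lt hq.1) (hg0 x)
              _ < (q:ℝ) * (a / q) := by
                  apply mul_lt_mul_of_pos_left hq.2 hq0'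
              _ = a := by field_simp
          · rw [if_neg hq0] at hq; exact hq.elim
      rw [key]
      apply T.isOpen_iUnion_ctble
      intro q
      by_cases hq0 : 0 < q
      · rw [if_pos hq0]; exact T.isOpen_inter _ _ (T.isOpen_ray_lt hf _) (T.isOpen_ray_lt hg _)
      · rw [if_neg hq0]; exact T.isOpen_empty
    · push_neg at ha
      have : {x | f x * g x < a} = ∅ := by
        ext x; simp only [Set.mem_setOf_eq, Set.mem_empty_iff_false, iff_false, not_lt]
        exact le_trans ha (mul_nonneg (hf0 x) (hg0 x))
      rw [this]; exact T.isOpen_empty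



theorem isOpen_union (s t : Set X) (hs : T.IsOpen s) (ht : T.IsOpen t) :
    T.IsOpen (s ∪ t) := by
  have h : s ∪ t = ⋃ n : ℕ, (if n = 0 then s else t) := by
    ext x
    simp only [Set.mem_union, Set.mem_iUnion]
    constructor
    · rintro (h | h)
      · exact ⟨0, by simp [h]⟩
      · exact ⟨1, by simp [h]⟩
    · rintro ⟨n, hn⟩
      by_cases h : n = 0
      · rw [if_pos h] at hn; exact Or.inl hn
      · rw [if_neg h] at hn; exact Or.inr hn
  rw [h]
  apply T.isOpen_iUnion
  intro n
  by_cases h : n = 0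
  · rw [if_pos h]; exact hs
  · rw [if_neg h]; exact ht

theorem isOpen_biInter_finset {ι : Type*} (s : Finset ι) (f : ι → Set X)
    (h : ∀ i ∈ s, T.IsOpen (f i)) : T.IsOpen (⋂ i ∈ s, f i) := by
  classical
  induction s using Finset.induction with
  | empty => simpa using T.isOpen_univ
  | @insert a s ha ih =>
    rw [Finset.set_biInter_insert]
    exact T.isOpen_inter _ _ (h _ (Finset.mem_insert_self _ _))
      (ih fun i hi => h i (Finset.mem_insert_of_mem hi))

theorem isOpen_biUnion_finset {ι : Type*} (s : Finset ι) (f : ι → Set X)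
    (h : ∀ i ∈ s, T.IsOpen (f i)) : T.IsOpen (⋃ i ∈ s, f i) := by
  classical
  induction s using Finset.induction with
  | empty => simpa using T.isOpen_empty
  | @insert a s ha ih =>
    rw [Finset.set_biUnion_insert]
    exact T.isOpen_union _ _ (h _ (Finset.mem_insert_self _ _))
      (ih fun i hi => h i (Finset.mem_insert_of_mem hi))

theorem countablyCompactOn_of_closed (hcc : T.CountablyCompact) {L : Set X}
    (hL : T.IsClosed L) : T.CountablyCompactOn L := by
  intro U hU hcov
  set W : ℕ → Set X := fun n => if n = 0 then Lᶜ else U (n - 1) with hW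
  have hWopen : ∀ n, T.IsOpen (W n) := by
    intro n
    by_cases h : n = 0
    · simp only [hW, if_pos h]; exact hL
    · simp only [hW, if_neg h]; exact hU _
  have hWcov : Set.univ ⊆ ⋃ n, W n := by
    intro x _
    by_cases hx : x ∈ L
    · obtain ⟨n, hn⟩ := Set.mem_iUnion.1 (hcov hx)
      exact Set.mem_iUnion.2 ⟨n + 1, by simp [hW, hn]⟩
    · exact Set.mem_iUnion.2 ⟨0, by simp [hW, hx]⟩
  obtain ⟨s, hs⟩ := hcc W hWopen hWcov
  refine ⟨(s.erase 0).image (· - 1), ?_⟩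
  intro x hx
  obtain ⟨n, hn, hxn⟩ := Set.mem_iUnion₂.1 (hs (Set.mem_univ x))
  have hn0 : n ≠ 0 := by
    rintro rfl
    simp only [hW, if_pos rfl] at hxn
    exact hxn hx
  rw [hW] at hxn
  simp only [if_neg hn0] at hxn
  exact Set.mem_iUnion₂.2 ⟨n - 1, Finset.mem_image.2 ⟨n, Finset.mem_erase.2 ⟨hn0, hn⟩, rfl⟩, hxn⟩

theorem finite_subcover (hcc : T.CountablyCompact) (hl : T.Lindelof)
    {L : Set X} (hL : T.IsClosed L) {ι : Type*} (V : ι → Set X)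
    (hV : ∀ i, T.IsOpen (V i)) (hcover : L ⊆ ⋃ i, V i) :
    ∃ s : Finset ι, L ⊆ ⋃ i ∈ s, V i := by
  classical
  set 𝒰 : Set (Set X) := insert Lᶜ (Set.range V) with h𝒰
  have h1 : ∀ U ∈ 𝒰, T.IsOpen U := by
    rintro U (rfl | ⟨i, rfl⟩)
    · exact hL
    · exact hV i
  have h2 : ⋃₀ 𝒰 = Set.univ := by
    apply Set.eq_univ_of_forall
    intro x
    by_cases hx : x ∈ L
    · obtain ⟨i, hi⟩ := Set.mem_iUnion.1 (hcover hx)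
      exact ⟨V i, Set.mem_insert_of_mem _ ⟨i, rfl⟩, hi⟩
    · exact ⟨Lᶜ, Set.mem_insert _ _, hx⟩
  obtain ⟨𝒱, h𝒱sub, h𝒱c, h𝒱cov⟩ := hl 𝒰 h1 h2
  have hSc : (𝒱 ∩ Set.range V).Countable := h𝒱c.mono Set.inter_subset_left
  have hch : ∀ W : ↥(𝒱 ∩ Set.range V), ∃ i, V i = (W : Set X) := by
    rintro ⟨W, -, i, rfl⟩
    exact ⟨i, rfl⟩
  choose c hc using hch
  have hJc : (Set.range c).Countable := by
    haveI := hSc.to_subtype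
    exact Set.countable_range c
  have hcov2 : L ⊆ ⋃ i ∈ Set.range c, V i := by
    intro x hx
    have hx' : x ∈ ⋃₀ 𝒱 := h𝒱cov ▸ Set.mem_univ x
    obtain ⟨W, hW𝒱, hxW⟩ := hx'
    have hWr : W ∈ Set.range V := by
      rcases h𝒱sub hW𝒱 with rfl | h
      · exact absurd hx hxW
      · exact h
    refine Set.mem_iUnion₂.2 ⟨c ⟨W, hW𝒱, hWr⟩, ⟨⟨W, hW𝒱, hWr⟩, rfl⟩, ?_⟩
    rw [hc ⟨W, hW𝒱, hWr⟩]
    exact hxW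
  rcases (Set.range c).eq_empty_or_nonempty with hemp | hne
  · rw [hemp] at hcov2
    simp only [Set.mem_empty_iff_false, Set.iUnion_of_empty, Set.iUnion_empty] at hcov2
    exact ⟨∅, by simpa using hcov2⟩
  · obtain ⟨e, he⟩ := Set.Countable.exists_eq_range hJc hne
    have hcov3 : L ⊆ ⋃ n : ℕ, V (e n) := by
      intro x hx
      obtain ⟨i, hi, hxi⟩ := Set.mem_iUnion₂.1 (hcov2 hx)
      rw [he] at hi
      obtain ⟨n, rfl⟩ := hi
      exact Set.mem_iUnion.2 ⟨n, hxi⟩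
    obtain ⟨t, ht⟩ := T.countablyCompactOn_of_closed hcc hL (fun n => V (e n))
      (fun n => hV _) hcov3
    refine ⟨t.image e, ?_⟩
    intro x hx
    obtain ⟨n, hn, hxn⟩ := Set.mem_iUnion₂.1 (ht hx)
    exact Set.mem_iUnion₂.2 ⟨e n, Finset.mem_image.2 ⟨n, hn, rfl⟩, hxn⟩

theorem normal_of (hcc : T.CountablyCompact) (hl : T.Lindelof) (hh : T.Hausdorff) :
    T.Normal := by
  have step1 : ∀ (B : Set X), T.IsClosed B → ∀ x ∉ B,
      ∃ U V : Set X, T.IsOpen U ∧ T.IsOpen V ∧ x ∈ U ∧ B ⊆ V ∧ U ∩ V = ∅ := by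
    intro B hB x hx
    have hxy : ∀ y : ↥B, ∃ U V : Set X, T.IsOpen U ∧ T.IsOpen V ∧ x ∈ U ∧ (y : X) ∈ V ∧
        U ∩ V = ∅ := by
      rintro ⟨y, hy⟩
      exact hh x y (fun h => hx (h ▸ hy))
    choose u v hu hv hxu hyv huv using hxy
    have hcov : B ⊆ ⋃ y : ↥B, v y := fun y hy =>
      Set.mem_iUnion.2 ⟨⟨y, hy⟩, hyv ⟨y, hy⟩⟩
    obtain ⟨s, hs⟩ := T.finite_subcover hcc hl hB v hv hcov
    refine ⟨⋂ y ∈ s, u y, ⋃ y ∈ s, v y, T.isOpen_biInter_finset s u (fun i _ => hu i),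
      T.isOpen_biUnion_finset s v (fun i _ => hv i), Set.mem_iInter₂.2 (fun y _ => hxu y),
      hs, ?_⟩
    ext z
    simp only [Set.mem_inter_iff, Set.mem_iInter, Set.mem_iUnion, Set.mem_empty_iff_false,
      iff_false, not_and]
    rintro hz ⟨y, hy, hzy⟩
    have : z ∈ u y ∩ v y := ⟨hz y hy, hzy⟩
    rw [huv y] at this
    exact this
  intro A B hA hB hAB
  have hxy : ∀ x : ↥A, ∃ U V : Set X, T.IsOpen U ∧ T.IsOpen V ∧ (x : X) ∈ U ∧ B ⊆ V ∧
      U ∩ V = ∅ := by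
    rintro ⟨x, hx⟩
    apply step1 B hB x
    intro hxB
    have : x ∈ A ∩ B := ⟨hx, hxB⟩
    rw [hAB] at this
    exact this
  choose u v hu hv hxu hBv huv using hxy
  have hcov : A ⊆ ⋃ x : ↥A, u x := fun x hx =>
    Set.mem_iUnion.2 ⟨⟨x, hx⟩, hxu ⟨x, hx⟩⟩
  obtain ⟨s, hs⟩ := T.finite_subcover hcc hl hA u hu hcov
  rcases s.eq_empty_or_nonempty with rfl | hsne
  · simp only [Finset.notMem_empty, Set.iUnion_of_empty, Set.iUnion_empty] at hs
    exact ⟨∅, Set.univ, T.isOpen_empty, T.isOpen_univ, by simpa using hs,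
      Set.subset_univ B, by simp⟩
  · refine ⟨⋃ x ∈ s, u x, ⋂ x ∈ s, v x, T.isOpen_biUnion_finset s u (fun i _ => hu i),
      T.isOpen_biInter_finset s v (fun i _ => hv i), hs,
      Set.subset_iInter₂ (fun x _ => hBv x), ?_⟩
    ext z
    simp only [Set.mem_inter_iff, Set.mem_iUnion, Set.mem_iInter, Set.mem_empty_iff_false,
      iff_false, not_and]
    rintro ⟨x, hx, hzx⟩ hz
    have : z ∈ u x ∩ v x := ⟨hzx, hz x hx⟩
    rw [huv x] at this
    exact this


theorem isClosed_univ : T.IsClosed Set.univ := by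
  have : (Set.univ : Set X)ᶜ = ∅ := Set.compl_univ
  rw [IsClosed, this]
  exact T.isOpen_empty

theorem interp_total (hN : T.Normal) (Cl W : Set X) :
    ∃ p : Set X × Set X, T.IsClosed Cl → T.IsOpen W → Cl ⊆ W →
      (T.IsOpen p.1 ∧ T.IsClosed p.2 ∧ Cl ⊆ p.1 ∧ p.1 ⊆ p.2 ∧ p.2 ⊆ W) := by
  by_cases h : T.IsClosed Cl ∧ T.IsOpen W ∧ Cl ⊆ W
  · obtain ⟨hC, hW, hCW⟩ := h
    have hWc : T.IsClosed Wᶜ := by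
      rw [IsClosed, compl_compl]; exact hW
    have hdisj : Cl ∩ Wᶜ = ∅ := by
      ext z
      simp only [Set.mem_inter_iff, Set.mem_compl_iff, Set.mem_empty_iff_false, iff_false,
        not_and, not_not]
      exact fun hz => hCW hz
    obtain ⟨U, V, hU, hV, hCU, hWV, hUV⟩ := hN Cl Wᶜ hC hWc hdisj
    refine ⟨(U, Vᶜ), fun _ _ _ => ⟨hU, ?_, hCU, ?_, ?_⟩⟩
    · rw [IsClosed, compl_compl]; exact hV
    · intro z hz
      simp only [Set.mem_compl_iff]
      intro hzV
      exact (Set.eq_empty_iff_forall_notMem.1 hUV z) ⟨hz, hzV⟩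
    · intro z hz
      by_contra hzW
      exact hz (hWV hzW)
  · exact ⟨(∅, ∅), fun h1 h2 h3 => absurd ⟨h1, h2, h3⟩ h⟩

noncomputable def pick (hN : T.Normal) (Cl W : Set X) : Set X × Set X :=
  Classical.choose (T.interp_total hN Cl W)

theorem pick_spec (hN : T.Normal) {Cl W : Set X} (h1 : T.IsClosed Cl) (h2 : T.IsOpen W)
    (h3 : Cl ⊆ W) :
    T.IsOpen (T.pick hN Cl W).1 ∧ T.IsClosed (T.pick hN Cl W).2 ∧ Cl ⊆ (T.pick hN Cl W).1 ∧
      (T.pick hN Cl W).1 ⊆ (T.pick hN Cl W).2 ∧ (T.pick hN Cl W).2 ⊆ W :=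
  Classical.choose_spec (T.interp_total hN Cl W) h1 h2 h3

def urybase (A B : Set X) : ℕ → Set X × Set X := fun k =>
  if k = 0 then (∅, A) else if k = 1 then (Bᶜ, Set.univ) else (Set.univ, Set.univ)

noncomputable def urystep (hN : T.Normal) (g : ℕ → Set X × Set X) : ℕ → Set X × Set X :=
  fun m => if m % 2 = 0 then g (m / 2) else T.pick hN (g (m / 2)).2 (g (m / 2 + 1)).1

noncomputable def uryG (hN : T.Normal) (A B : Set X) : ℕ → ℕ → Set X × Set X
  | 0 => urybase A B
  | n + 1 => T.urystep hN (uryG hN A B n)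

theorem urystep_even (hN : T.Normal) (g : ℕ → Set X × Set X) (k : ℕ) :
    T.urystep hN g (2 * k) = g k := by
  have h1 : 2 * k % 2 = 0 := by omega
  have h2 : 2 * k / 2 = k := by omega
  simp [urystep, h1, h2]

theorem urystep_odd (hN : T.Normal) (g : ℕ → Set X × Set X) (k : ℕ) :
    T.urystep hN g (2 * k + 1) = T.pick hN (g k).2 (g (k + 1)).1 := by
  have h1 : (2 * k + 1) % 2 = 1 := by omega
  have h2 : (2 * k + 1) / 2 = k := by omega
  simp [urystep, h1, h2]

def uryInv (g : ℕ → Set X × Set X) : Prop :=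
  ∀ k, T.IsOpen (g k).1 ∧ T.IsClosed (g k).2 ∧ (g k).1 ⊆ (g k).2 ∧ (g k).2 ⊆ (g (k + 1)).1

theorem uryInv_base {A B : Set X} (hA : T.IsClosed A) (hB : T.IsClosed B) (hd : A ∩ B = ∅) :
    T.uryInv (urybase A B) := by
  intro k
  have hAB : A ⊆ Bᶜ := by
    intro x hx hxB
    exact (Set.eq_empty_iff_forall_notMem.1 hd x) ⟨hx, hxB⟩
  match k with
  | 0 =>
    refine ⟨T.isOpen_empty, hA, Set.empty_subset _, ?_⟩
    simpa [urybase] using hAB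
  | 1 =>
    exact ⟨hB, T.isClosed_univ, Set.subset_univ _, by simp [urybase]⟩
  | (n + 2) =>
    refine ⟨T.isOpen_univ, T.isClosed_univ, subset_rfl, ?_⟩
    simp [urybase]

theorem uryInv_step (hN : T.Normal) {g : ℕ → Set X × Set X} (hg : T.uryInv g) :
    T.uryInv (T.urystep hN g) := by
  intro m
  rcases Nat.even_or_odd m with ⟨k, hk⟩ | ⟨k, hk⟩
  · subst hk
    have e1 : k + k = 2 * k := by ring
    rw [e1, T.urystep_even hN g k, T.urystep_odd hN g k]
    have spec := T.pick_spec hN (hg k).2.1 (hg (k + 1)).1 (hg k).2.2.2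
    exact ⟨(hg k).1, (hg k).2.1, (hg k).2.2.1, spec.2.2.1⟩
  · subst hk
    rw [T.urystep_odd hN g k]
    have e2 : 2 * k + 1 + 1 = 2 * (k + 1) := by ring
    rw [e2, T.urystep_even hN g (k + 1)]
    have spec := T.pick_spec hN (hg k).2.1 (hg (k + 1)).1 (hg k).2.2.2
    exact ⟨spec.1, spec.2.1, spec.2.2.2.1, spec.2.2.2.2⟩

theorem uryInv_G (hN : T.Normal) {A B : Set X} (hA : T.IsClosed A) (hB : T.IsClosed B)
    (hd : A ∩ B = ∅) : ∀ n, T.uryInv (T.uryG hN A B n) := by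
  intro n
  induction n with
  | zero => exact T.uryInv_base hA hB hd
  | succ n ih => exact T.uryInv_step hN ih

theorem uryMono11 {g : ℕ → Set X × Set X} (hg : T.uryInv g) {j k : ℕ} (h : j ≤ k) :
    (g j).1 ⊆ (g k).1 := by
  induction k with
  | zero =>
    rw [Nat.le_zero.1 h]
  | succ k ih =>
    rcases Nat.lt_or_ge j (k + 1) with hlt | hge
    · exact ((ih (by omega)).trans (hg k).2.2.1).trans (hg k).2.2.2
    · rw [(by omega : j = k + 1)]

theorem uryMono12 {g : ℕ → Set X × Set X} (hg : T.uryInv g) {j k : ℕ} (h : j ≤ k) :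
    (g j).1 ⊆ (g k).2 := (T.uryMono11 hg h).trans (hg k).2.2.1

theorem uryG_succ (hN : T.Normal) (A B : Set X) (n : ℕ) :
    T.uryG hN A B (n + 1) = T.urystep hN (T.uryG hN A B n) := by
  rfl

theorem uryG_lift (hN : T.Normal) (A B : Set X) (n : ℕ) :
    ∀ d k, T.uryG hN A B (n + d) (2 ^ d * k) = T.uryG hN A B n k := by
  intro d
  induction d with
  | zero => intro k; simp
  | succ d ih =>
    intro k
    have e1 : n + (d + 1) = (n + d) + 1 := by ring
    have e2 : 2 ^ (d + 1) * k = 2 * (2 ^ d * k) := by ring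
    rw [e1, e2, uryG_succ, T.urystep_even, ih]

theorem uryG_cmp (hN : T.Normal) {A B : Set X} (hA : T.IsClosed A) (hB : T.IsClosed B)
    (hd : A ∩ B = ∅) {m j n k : ℕ} (h : j * 2 ^ n ≤ k * 2 ^ m) :
    (T.uryG hN A B m j).1 ⊆ (T.uryG hN A B n k).2 := by
  have e1 : T.uryG hN A B (m + n) (2 ^ n * j) = T.uryG hN A B m j := T.uryG_lift hN A B m n j
  have e2 : T.uryG hN A B (m + n) (2 ^ m * k) = T.uryG hN A B n k := by
    rw [(by ring : m + n = n + m)]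
    exact T.uryG_lift hN A B n m k
  rw [← e1, ← e2]
  apply T.uryMono12 (T.uryInv_G hN hA hB hd (m + n))
  rw [Nat.mul_comm (2 ^ n) j, Nat.mul_comm (2 ^ m) k]
  exact h

theorem uryG_zero (hN : T.Normal) (A B : Set X) (n : ℕ) :
    T.uryG hN A B n 0 = (∅, A) := by
  induction n with
  | zero => rfl
  | succ n ih =>
    rw [uryG_succ, (by ring : (0 : ℕ) = 2 * 0), T.urystep_even, ih]

theorem uryG_top (hN : T.Normal) (A B : Set X) (n : ℕ) :
    T.uryG hN A B n (2 ^ n) = (Bᶜ, Set.univ) := by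
  induction n with
  | zero => rfl
  | succ n ih =>
    rw [uryG_succ, (by ring : (2 : ℕ) ^ (n + 1) = 2 * 2 ^ n), T.urystep_even, ih]

theorem uryG_junk (hN : T.Normal) (A B : Set X) :
    ∀ n k, 2 ^ n < k → T.uryG hN A B n k = (Set.univ, Set.univ) := by
  intro n
  induction n with
  | zero =>
    intro k hk
    have : k ≠ 0 ∧ k ≠ 1 := by constructor <;> omega
    simp [uryG, urybase, this.1, this.2]
  | succ n ih =>
    intro k hk
    rcases Nat.even_or_odd k with ⟨j, hj⟩ | ⟨j, hj⟩
    · subst hj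
      rw [(by ring : j + j = 2 * j), uryG_succ, T.urystep_even, ih j (by omega)]
    · subst hj
      rw [uryG_succ, T.urystep_odd]
      have h2 : (T.uryG hN A B n (j + 1)).1 = Set.univ := by
        rw [ih (j + 1) (by omega)]
      have h1 : (T.uryG hN A B n j).2 = Set.univ := by
        rcases Nat.lt_or_ge (2 ^ n) j with hlt | hge
        · rw [ih j hlt]
        · have : j = 2 ^ n := by omega
          rw [this, T.uryG_top]
      rw [h1, h2]
      have spec := T.pick_spec hN T.isClosed_univ T.isOpen_univ subset_rfl
      have p1 : (T.pick hN Set.univ Set.univ).1 = Set.univ :=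
        Set.eq_univ_of_univ_subset spec.2.2.1
      have p2 : (T.pick hN Set.univ Set.univ).2 = Set.univ := by
        apply Set.eq_univ_of_univ_subset
        calc Set.univ = (T.pick hN Set.univ Set.univ).1 := p1.symm
          _ ⊆ (T.pick hN Set.univ Set.univ).2 := spec.2.2.2.1
      rw [Prod.ext_iff]
      exact ⟨p1, p2⟩

def uryS (hN : T.Normal) (A B : Set X) (x : X) : Set ℝ :=
  {q : ℝ | ∃ n k : ℕ, k ≤ 2 ^ (n + 1) ∧ q = (k : ℝ) / 2 ^ n ∧ x ∈ (T.uryG hN A B n k).1}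

noncomputable def uryF (hN : T.Normal) (A B : Set X) (x : X) : ℝ :=
  sInf (T.uryS hN A B x)

theorem uryS_nonempty (hN : T.Normal) (A B : Set X) (x : X) :
    (2 : ℝ) ∈ T.uryS hN A B x := by
  refine ⟨0, 2, by norm_num, by norm_num, ?_⟩
  rw [T.uryG_junk hN A B 0 2 (by norm_num)]
  exact Set.mem_univ x

theorem uryS_bddBelow (hN : T.Normal) (A B : Set X) (x : X) :
    ∀ q ∈ T.uryS hN A B x, (0 : ℝ) ≤ q := by
  rintro q ⟨n, k, -, rfl, -⟩
  positivity

theorem uryF_nonneg (hN : T.Normal) (A B : Set X) (x : X) : 0 ≤ T.uryF hN A B x :=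
  le_csInf ⟨2, T.uryS_nonempty hN A B x⟩ (T.uryS_bddBelow hN A B x)

theorem uryF_le_two (hN : T.Normal) (A B : Set X) (x : X) : T.uryF hN A B x ≤ 2 :=
  csInf_le ⟨0, T.uryS_bddBelow hN A B x⟩ (T.uryS_nonempty hN A B x)

theorem uryF_zero_on (hN : T.Normal) {A B : Set X} (hA : T.IsClosed A) (hB : T.IsClosed B)
    (hd : A ∩ B = ∅) {x : X} (hx : x ∈ A) : T.uryF hN A B x = 0 := by
  have hmem : ∀ n : ℕ, (1 : ℝ) / 2 ^ n ∈ T.uryS hN A B x := by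
    intro n
    refine ⟨n, 1, Nat.one_le_two_pow, by norm_num, ?_⟩
    have h0 : x ∈ (T.uryG hN A B n 0).2 := by
      rw [T.uryG_zero]; exact hx
    exact ((T.uryInv_G hN hA hB hd n) 0).2.2.2 h0
  have hle : ∀ n : ℕ, T.uryF hN A B x ≤ 1 / 2 ^ n := fun n =>
    csInf_le ⟨0, T.uryS_bddBelow hN A B x⟩ (hmem n)
  have h0 : T.uryF hN A B x ≤ 0 := by
    by_contra hpos
    push_neg at hpos
    obtain ⟨n, hn⟩ := exists_pow_lt_of_lt_one hpos (by norm_num : (1 : ℝ) / 2 < 1)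
    have := hle n
    rw [div_pow, one_pow] at hn
    linarith
  exact le_antisymm h0 (T.uryF_nonneg hN A B x)

theorem uryF_ge_one_on (hN : T.Normal) {A B : Set X} (hA : T.IsClosed A) (hB : T.IsClosed B)
    (hd : A ∩ B = ∅) {x : X} (hx : x ∈ B) : 1 ≤ T.uryF hN A B x := by
  apply le_csInf ⟨2, T.uryS_nonempty hN A B x⟩
  rintro q ⟨n, k, hk, rfl, hxk⟩
  by_contra hlt
  push_neg at hlt
  have hkn : k < 2 ^ n := by
    have h2 : (k : ℝ) < 2 ^ n := by
      rw [div_lt_one (by positivity)] at hlt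
      exact hlt
    exact_mod_cast h2
  have hsub : (T.uryG hN A B n k).1 ⊆ (T.uryG hN A B n (2 ^ n)).1 :=
    T.uryMono11 (T.uryInv_G hN hA hB hd n) (le_of_lt hkn)
  rw [T.uryG_top] at hsub
  exact (hsub hxk) hx

theorem uryF_ge_of_not_mem (hN : T.Normal) {A B : Set X} (hA : T.IsClosed A)
    (hB : T.IsClosed B) (hd : A ∩ B = ∅) {x : X} {n k : ℕ}
    (hx : x ∉ (T.uryG hN A B n k).2) : (k : ℝ) / 2 ^ n ≤ T.uryF hN A B x := by
  apply le_csInf ⟨2, T.uryS_nonempty hN A B x⟩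
  rintro q ⟨m, j, hj, rfl, hxj⟩
  by_contra hlt
  push_neg at hlt
  have hcmp : j * 2 ^ n ≤ k * 2 ^ m := by
    rw [div_lt_div_iff₀ (by positivity) (by positivity)] at hlt
    have : (j : ℝ) * 2 ^ n < (k : ℝ) * 2 ^ m := by linarith
    have h2 : (j * 2 ^ n : ℕ) < (k * 2 ^ m : ℕ) := by exact_mod_cast this
    omega
  exact hx (T.uryG_cmp hN hA hB hd hcmp hxj)

theorem uryF_le_of_mem (hN : T.Normal) {A B : Set X} (hA : T.IsClosed A)
    (hB : T.IsClosed B) (hd : A ∩ B = ∅) {x : X} {n k : ℕ}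
    (hx : x ∈ (T.uryG hN A B n k).2) : T.uryF hN A B x ≤ ((k : ℝ) + 1) / 2 ^ n := by
  rcases Nat.lt_or_ge (2 ^ (n + 1)) (k + 1) with hbig | hsmall
  · have : (2 : ℝ) ≤ ((k : ℝ) + 1) / 2 ^ n := by
      rw [le_div_iff₀ (by positivity)]
      have : (2 : ℝ) ^ (n + 1) ≤ (k : ℝ) + 1 := by
        have : ((2 ^ (n + 1) : ℕ) : ℝ) ≤ ((k + 1 : ℕ) : ℝ) := by exact_mod_cast le_of_lt hbig
        push_cast at this
        linarith
      calc (2 : ℝ) * 2 ^ n = 2 ^ (n + 1) := by ring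
        _ ≤ (k : ℝ) + 1 := this
    linarith [T.uryF_le_two hN A B x]
  · have hmem : ((k : ℝ) + 1) / 2 ^ n ∈ T.uryS hN A B x := by
      refine ⟨n, k + 1, hsmall, by push_cast; ring, ?_⟩
      exact ((T.uryInv_G hN hA hB hd n) k).2.2.2 hx
    exact csInf_le ⟨0, T.uryS_bddBelow hN A B x⟩ hmem

theorem uryF_lt_open (hN : T.Normal) {A B : Set X} (hA : T.IsClosed A) (hB : T.IsClosed B)
    (hd : A ∩ B = ∅) (a : ℝ) : T.IsOpen {x | T.uryF hN A B x < a} := by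
  have key : {x | T.uryF hN A B x < a} =
      ⋃ p : {p : ℕ × ℕ // p.2 ≤ 2 ^ (p.1 + 1) ∧ ((p.2 : ℝ) / 2 ^ p.1 < a)},
        (T.uryG hN A B (p : ℕ × ℕ).1 (p : ℕ × ℕ).2).1 := by
    ext x
    simp only [Set.mem_setOf_eq, Set.mem_iUnion]
    constructor
    · intro hx
      obtain ⟨q, hq, hqa⟩ := exists_lt_of_csInf_lt ⟨2, T.uryS_nonempty hN A B x⟩ hx
      obtain ⟨n, k, hk, rfl, hxk⟩ := hq
      exact ⟨⟨⟨n, k⟩, hk, hqa⟩, hxk⟩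
    · rintro ⟨⟨⟨n, k⟩, hk, hka⟩, hx⟩
      calc T.uryF hN A B x ≤ (k : ℝ) / 2 ^ n :=
            csInf_le ⟨0, T.uryS_bddBelow hN A B x⟩ ⟨n, k, hk, rfl, hx⟩
        _ < a := hka
  rw [key]
  exact T.isOpen_iUnion_ctble _ (fun p => ((T.uryInv_G hN hA hB hd _) _).1)

theorem uryF_gt_open (hN : T.Normal) {A B : Set X} (hA : T.IsClosed A) (hB : T.IsClosed B)
    (hd : A ∩ B = ∅) (a : ℝ) : T.IsOpen {x | a < T.uryF hN A B x} := by
  rcases lt_or_ge a 0 with ha | ha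
  · have : {x | a < T.uryF hN A B x} = Set.univ := by
      apply Set.eq_univ_of_forall
      intro x
      exact lt_of_lt_of_le ha (T.uryF_nonneg hN A B x)
    rw [this]; exact T.isOpen_univ
  · have key : {x | a < T.uryF hN A B x} =
        ⋃ p : {p : ℕ × ℕ // a < (p.2 : ℝ) / 2 ^ p.1},
          ((T.uryG hN A B (p : ℕ × ℕ).1 (p : ℕ × ℕ).2).2)ᶜ := by
      ext x
      simp only [Set.mem_setOf_eq, Set.mem_iUnion, Set.mem_compl_iff]
      constructor
      · intro hx
        obtain ⟨n, hn⟩ := exists_pow_lt_of_lt_one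
          (show (0 : ℝ) < (T.uryF hN A B x - a) / 2 by linarith)
          (by norm_num : (1 : ℝ) / 2 < 1)
        rw [div_pow, one_pow] at hn
        have h2n : (2 : ℝ) / 2 ^ n < T.uryF hN A B x - a := by
          rw [div_lt_iff₀ (by positivity)] at hn ⊢
          linarith
        set k : ℕ := ⌊a * 2 ^ n⌋₊ + 1 with hk
        have hak : a < (k : ℝ) / 2 ^ n := by
          rw [lt_div_iff₀ (by positivity)]
          rw [hk]; push_cast
          exact Nat.lt_floor_add_one (a * 2 ^ n)
        have hk2 : ((k : ℝ) + 1) / 2 ^ n < T.uryF hN A B x := by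
          rw [div_lt_iff₀ (by positivity)]
          rw [hk]; push_cast
          have hfl : (⌊a * 2 ^ n⌋₊ : ℝ) ≤ a * 2 ^ n := Nat.floor_le (by positivity)
          have := (div_lt_iff₀ (show (0:ℝ) < 2 ^ n by positivity)).1 h2n
          nlinarith [hfl]
        have hnot : x ∉ (T.uryG hN A B n k).2 := by
          intro hmem
          have hle := T.uryF_le_of_mem hN hA hB hd hmem
          linarith
        exact ⟨⟨⟨n, k⟩, hak⟩, hnot⟩
      · rintro ⟨⟨⟨n, k⟩, hak⟩, hx⟩
        exact lt_of_lt_of_le hak (T.uryF_ge_of_not_mem hN hA hB hd hx)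
    rw [key]
    exact T.isOpen_iUnion_ctble _ (fun p => ((T.uryInv_G hN hA hB hd _) _).2.1)

theorem urysohn (hN : T.Normal) {A B : Set X} (hA : T.IsClosed A) (hB : T.IsClosed B)
    (hd : A ∩ B = ∅) :
    ∃ φ : X → ℝ, T.SigmaContinuous φ ∧ (∀ x, 0 ≤ φ x) ∧ (∀ x, φ x ≤ 1) ∧
      (∀ x ∈ A, φ x = 1) ∧ (∀ x ∈ B, φ x = 0) := by
  have hcont : T.SigmaContinuous (T.uryF hN A B) :=
    T.sigmaContinuous_of_rays (T.uryF_gt_open hN hA hB hd) (T.uryF_lt_open hN hA hB hd)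
  refine ⟨fun x => max 0 (1 - T.uryF hN A B x), ?_, ?_, ?_, ?_, ?_⟩
  · exact T.sigmaContinuous_comp hcont
      (continuous_const.max (continuous_const.sub continuous_id))
  · intro x
    show 0 ≤ max 0 (1 - T.uryF hN A B x)
    exact le_max_left _ _
  · intro x
    show max 0 (1 - T.uryF hN A B x) ≤ 1
    apply max_le (by norm_num)
    have := T.uryF_nonneg hN A B x
    linarith
  · intro x hx
    show max 0 (1 - T.uryF hN A B x) = 1
    rw [T.uryF_zero_on hN hA hB hd hx]
    norm_num
  · intro x hx
    show max 0 (1 - T.uryF hN A B x) = 0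
    have := T.uryF_ge_one_on hN hA hB hd hx
    have h1 : 1 - T.uryF hN A B x ≤ 0 := by linarith
    exact max_eq_left h1


end SigmaTopology

/-- Convergence of a net to a point in a σ-topological space: the net is eventually in
every σ-open set containing the point. -/
def NetConvergesTo {X A : Type*} [Preorder A] (T : SigmaTopology X) (x : A → X) (l : X) :
    Prop :=
  ∀ U : Set X, T.IsOpen U → l ∈ U → ∃ a₀ : A, ∀ a : A, a₀ ≤ a → x a ∈ U

/-- A positive bounded linear functional on `C_σ(X)`, with bound constant `C`. -/
def IsPosBddLinFunctional {X : Type*} (T : SigmaTopology X) (I : (X → ℝ) → ℝ) (C : ℝ) :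
    Prop :=
  0 ≤ C ∧
  (∀ f g : X → ℝ, T.SigmaContinuous f → T.SigmaContinuous g → I (f + g) = I f + I g) ∧
  (∀ (c : ℝ) (f : X → ℝ), T.SigmaContinuous f → I (c • f) = c * I f) ∧
  (∀ f : X → ℝ, T.SigmaContinuous f → 0 ≤ f → 0 ≤ I f) ∧
  (∀ f : X → ℝ, T.SigmaContinuous f → |I f| ≤ C * ⨆ x, |f x|)

/-- `μ₀ K = inf { I f : f ∈ C_σ(X), f ≥ χ_K }`. -/
noncomputable def mu0 {X : Type*} (T : SigmaTopology X) (I : (X → ℝ) → ℝ) (K : Set X) : ℝ :=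
  sInf (I '' {f : X → ℝ | T.SigmaContinuous f ∧ ∀ x, K.indicator (fun _ => (1:ℝ)) x ≤ f x})

/-- (K3): additivity of `μ₀` on disjoint σ-closed sets. -/
theorem mu0_additive {X : Type*} (T : SigmaTopology X)
    (hcc : T.CountablyCompact) (hl : T.Lindelof) (hh : T.Hausdorff)
    (I : (X → ℝ) → ℝ) (C : ℝ) (hI : IsPosBddLinFunctional T I C)
    (K L : Set X) (hK : T.IsClosed K) (hL : T.IsClosed L) (hd : K ∩ L = ∅) :
    mu0 T I (K ∪ L) = mu0 T I K + mu0 T I L := by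
  classical
  obtain ⟨hC0, hadd, hsmul, hpos, hbdd⟩ := hI
  have hind : ∀ (S : Set X) (x : X), S.indicator (fun _ => (1 : ℝ)) x
      = if x ∈ S then 1 else 0 := fun S x => Set.indicator_apply S _ x
  let adm : Set X → Set (X → ℝ) := fun S =>
    {f : X → ℝ | T.SigmaContinuous f ∧ ∀ x, S.indicator (fun _ => (1 : ℝ)) x ≤ f x}
  have hmu : ∀ S : Set X, mu0 T I S = sInf (I '' adm S) := fun _ => rfl
  have hnonneg : ∀ S : Set X, ∀ f ∈ adm S, ∀ x, 0 ≤ f x := by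
    intro S f hf x
    refine le_trans ?_ (hf.2 x)
    rw [hind]
    split <;> norm_num
  have hbddS : ∀ S : Set X, BddBelow (I '' adm S) := by
    intro S
    refine ⟨0, ?_⟩
    rintro y ⟨f, hf, rfl⟩
    exact hpos f hf.1 (Pi.le_def.mpr fun x => hnonneg S f hf x)
  have hne : ∀ S : Set X, (I '' adm S).Nonempty := by
    intro S
    refine ⟨I (fun _ => 1), ⟨fun _ => 1, ⟨T.sigmaContinuous_const 1, ?_⟩, rfl⟩⟩
    intro x
    rw [hind]
    split <;> norm_num
  apply le_antisymm
  · -- subadditivity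
    have goal1 : ∀ b ∈ I '' adm L, ∀ a ∈ I '' adm K, mu0 T I (K ∪ L) ≤ a + b := by
      rintro b ⟨g, hg, rfl⟩ a ⟨f, hf, rfl⟩
      have hsum : T.SigmaContinuous (f + g) := T.sigmaContinuous_add hf.1 hg.1
      have hle : ∀ x, (K ∪ L).indicator (fun _ => (1 : ℝ)) x ≤ (f + g) x := by
        intro x
        have h1 := hf.2 x
        have h2 := hg.2 x
        rw [hind] at h1 h2 ⊢
        simp only [Pi.add_apply]
        by_cases hx : x ∈ K ∪ L
        · rw [if_pos hx]
          rcases hx with hxK | hxL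
          · rw [if_pos hxK] at h1
            have := hnonneg L g hg x
            linarith
          · rw [if_pos hxL] at h2
            have := hnonneg K f hf x
            linarith
        · rw [if_neg hx]
          have := hnonneg K f hf x
          have := hnonneg L g hg x
          linarith
      have heq : I (f + g) = I f + I g := hadd f g hf.1 hg.1
      calc mu0 T I (K ∪ L) ≤ I (f + g) := by
            rw [hmu]
            exact csInf_le (hbddS _) ⟨f + g, ⟨hsum, hle⟩, rfl⟩
        _ = I f + I g := heq
    have hstep : mu0 T I (K ∪ L) - mu0 T I K ≤ mu0 T I L := by
      rw [hmu L]
      apply le_csInf (hne L)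
      intro b hb
      have : mu0 T I (K ∪ L) - b ≤ mu0 T I K := by
        rw [hmu K]
        apply le_csInf (hne K)
        intro a ha
        have := goal1 b hb a ha
        linarith
      linarith
    linarith
  · -- superadditivity
    have hN := T.normal_of hcc hl hh
    obtain ⟨φ, hφc, hφ0, hφ1, hφA, hφB⟩ := T.urysohn hN hK hL hd
    rw [hmu (K ∪ L)]
    apply le_csInf (hne (K ∪ L))
    rintro b ⟨h, hadm, rfl⟩
    have h0 : ∀ x, 0 ≤ h x := hnonneg _ h hadm
    have hfc : T.SigmaContinuous (fun x => h x * φ x) :=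
      T.sigmaContinuous_mul_nonneg hadm.1 hφc h0 hφ0
    have h1φc : T.SigmaContinuous (fun x => 1 - φ x) :=
      T.sigmaContinuous_comp hφc (continuous_const.sub continuous_id)
    have hgc : T.SigmaContinuous (fun x => h x * (1 - φ x)) :=
      T.sigmaContinuous_mul_nonneg hadm.1 h1φc h0 (fun x => by have := hφ1 x; linarith)
    have hfadm : (fun x => h x * φ x) ∈ adm K := by
      refine ⟨hfc, fun x => ?_⟩
      rw [hind]
      by_cases hx : x ∈ K
      · rw [if_pos hx]
        have hx' := hadm.2 x
        rw [hind, if_pos (Set.mem_union_left L hx)] at hx'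
        simp only
        rw [hφA x hx, mul_one]
        exact hx'
      · rw [if_neg hx]
        exact mul_nonneg (h0 x) (hφ0 x)
    have hgadm : (fun x => h x * (1 - φ x)) ∈ adm L := by
      refine ⟨hgc, fun x => ?_⟩
      rw [hind]
      by_cases hx : x ∈ L
      · rw [if_pos hx]
        have hx' := hadm.2 x
        rw [hind, if_pos (Set.mem_union_right K hx)] at hx'
        simp only
        rw [hφB x hx]
        simpa using hx'
      · rw [if_neg hx]
        have := hφ1 x
        exact mul_nonneg (h0 x) (by linarith)
    have hfg : (fun x => h x * φ x) + (fun x => h x * (1 - φ x)) = h := by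
      funext x
      simp only [Pi.add_apply]
      ring
    have heq : I h = I (fun x => h x * φ x) + I (fun x => h x * (1 - φ x)) := by
      have hIfg := hadd _ _ hfc hgc
      rw [hfg] at hIfg
      exact hIfg
    have h1 : mu0 T I K ≤ I (fun x => h x * φ x) := by
      rw [hmu K]
      exact csInf_le (hbddS K) ⟨_, hfadm, rfl⟩
    have h2 : mu0 T I L ≤ I (fun x => h x * (1 - φ x)) := by
      rw [hmu L]
      exact csInf_le (hbddS L) ⟨_, hgadm, rfl⟩
    linarith
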